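/- There exists a constant C̄ > 0, independent of y, such that for every y ∈ ℝ³ with ‖y‖ < 1/2 and every s in the closed unit ball of ℝ³ with s ≠ y, one has ‖Dπ_y(s)‖ ≤ C̄/‖s−y‖ and ‖D²π_y(s)‖ ≤ C̄/‖s−y‖². -/

import Mathlib

noncomputable section

abbrev E3 : Type := EuclideanSpace ℝ (Fin 3)

/-- The projection `π_y` of the closed unit ball (minus `{y}`) onto the unit
sphere `S²`, along the ray from `y` through `s`. -/
def piProj (y : E3) (s : E3) : E3 :=
  y + ((-(inner ℝ y (s - y) : ℝ) +
        Real.sqrt ((inner ℝ y (s - y) : ℝ) ^ 2 + ‖s - y‖ ^ 2 * (1 - ‖y‖ ^ 2))) /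
      ‖s - y‖ ^ 2) • (s - y)

def Fm : E3 × E3 → E3 := fun p =>
  p.1 + ((-(inner ℝ p.1 p.2 : ℝ) +
      Real.sqrt ((inner ℝ p.1 p.2 : ℝ) ^ 2 + ‖p.2‖ ^ 2 * (1 - ‖p.1‖ ^ 2))) /
    ‖p.2‖ ^ 2) • p.2

def U : Set (E3 × E3) := {p | ‖p.1‖ < 1 ∧ p.2 ≠ 0}

lemma isOpen_U : IsOpen U := by
  have h1 : IsOpen {p : E3 × E3 | ‖p.1‖ < 1} :=
    isOpen_lt (by fun_prop) continuous_const
  have h2 : IsOpen {p : E3 × E3 | p.2 ≠ 0} :=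
    isOpen_ne_fun (by fun_prop) continuous_const
  exact h1.inter h2

lemma contDiffOn_Fm : ContDiffOn ℝ ⊤ Fm U := by
  intro p hp
  apply ContDiffAt.contDiffWithinAt
  obtain ⟨hy, hu⟩ := hp
  have hinner : ContDiffAt ℝ ⊤ (fun p : E3 × E3 => (inner ℝ p.1 p.2 : ℝ)) p :=
    ContDiffAt.inner ℝ contDiffAt_fst contDiffAt_snd
  have hn2 : ContDiffAt ℝ ⊤ (fun p : E3 × E3 => ‖p.2‖ ^ 2) p := by
    have : (fun p : E3 × E3 => ‖p.2‖ ^ 2) = fun p : E3 × E3 => (inner ℝ p.2 p.2 : ℝ) := by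
      funext q; rw [real_inner_self_eq_norm_sq]
    rw [this]
    exact ContDiffAt.inner ℝ contDiffAt_snd contDiffAt_snd
  have hn1 : ContDiffAt ℝ ⊤ (fun p : E3 × E3 => ‖p.1‖ ^ 2) p := by
    have : (fun p : E3 × E3 => ‖p.1‖ ^ 2) = fun p : E3 × E3 => (inner ℝ p.1 p.1 : ℝ) := by
      funext q; rw [real_inner_self_eq_norm_sq]
    rw [this]
    exact ContDiffAt.inner ℝ contDiffAt_fst contDiffAt_fst
  have hQ : ContDiffAt ℝ ⊤
      (fun p : E3 × E3 => (inner ℝ p.1 p.2 : ℝ) ^ 2 + ‖p.2‖ ^ 2 * (1 - ‖p.1‖ ^ 2)) p :=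
    (hinner.pow 2).add (hn2.mul (contDiffAt_const.sub hn1))
  have hQpos : (0:ℝ) < (inner ℝ p.1 p.2 : ℝ) ^ 2 + ‖p.2‖ ^ 2 * (1 - ‖p.1‖ ^ 2) := by
    have h1 : (0:ℝ) < ‖p.2‖ ^ 2 := by have := norm_pos_iff.mpr hu; positivity
    have h2 : (0:ℝ) < 1 - ‖p.1‖ ^ 2 := by nlinarith [norm_nonneg p.1]
    positivity
  have hsqrt := hQ.sqrt hQpos.ne'
  have hnum : ContDiffAt ℝ ⊤ (fun p : E3 × E3 =>
      -(inner ℝ p.1 p.2 : ℝ) + Real.sqrt ((inner ℝ p.1 p.2 : ℝ) ^ 2 + ‖p.2‖ ^ 2 * (1 - ‖p.1‖ ^ 2))) p :=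
    hinner.neg.add hsqrt
  have hden : (fun p : E3 × E3 => ‖p.2‖ ^ 2) p ≠ 0 := by
    simpa using (by have := norm_pos_iff.mpr hu; positivity : (0:ℝ) < ‖p.2‖ ^ 2).ne'
  exact contDiffAt_fst.add (((hnum.div hn2 hden)).smul contDiffAt_snd)

lemma Fm_homog (y u : E3) {c : ℝ} (hc : 0 < c) (hu : u ≠ 0) :
    Fm (y, c • u) = Fm (y, u) := by
  have hr : ‖u‖ ≠ 0 := norm_ne_zero_iff.mpr hu
  have h1 : (inner ℝ y (c • u) : ℝ) = c * inner ℝ y u := real_inner_smul_right y u c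
  have h2 : ‖c • u‖ = c * ‖u‖ := by rw [norm_smul, Real.norm_of_nonneg hc.le]
  simp only [Fm, h1, h2]
  have h3 : (c * (inner ℝ y u:ℝ))^2 + (c*‖u‖)^2 * (1-‖y‖^2)
      = c^2 * ((inner ℝ y u:ℝ)^2 + ‖u‖^2*(1-‖y‖^2)) := by ring
  rw [h3, Real.sqrt_mul (sq_nonneg c), Real.sqrt_sq hc.le]
  congr 1
  rw [smul_smul]
  congr 1
  field_simp

def T : E3 →L[ℝ] E3 × E3 := (0 : E3 →L[ℝ] E3).prod (ContinuousLinearMap.id ℝ E3)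

lemma normT : ‖T‖ ≤ 1 :=
  ContinuousLinearMap.opNorm_le_bound _ zero_le_one fun v => by
    simp [T, Prod.norm_def]

def LTm : ((E3 × E3) →L[ℝ] E3) →L[ℝ] (E3 →L[ℝ] E3) :=
  (ContinuousLinearMap.compL ℝ E3 (E3 × E3) E3).flip T

lemma LTm_apply (A : (E3 × E3) →L[ℝ] E3) : LTm A = A.comp T := rfl

lemma norm_LTm_apply (A : (E3 × E3) →L[ℝ] E3) : ‖LTm A‖ ≤ ‖A‖ := by
  rw [LTm_apply]
  calc ‖A.comp T‖ ≤ ‖A‖ * ‖T‖ := ContinuousLinearMap.opNorm_comp_le _ _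
    _ ≤ ‖A‖ * 1 := by gcongr; exact normT
    _ = ‖A‖ := mul_one _

def Sc (c : ℝ) : E3 →L[ℝ] E3 := c • ContinuousLinearMap.id ℝ E3

lemma norm_comp_Sc {W : Type*} [NormedAddCommGroup W] [NormedSpace ℝ W]
    {c : ℝ} (hc : 0 ≤ c) (A : E3 →L[ℝ] W) :
    ‖A.comp (Sc c)‖ ≤ c * ‖A‖ := by
  calc ‖A.comp (Sc c)‖ ≤ ‖A‖ * ‖Sc c‖ := ContinuousLinearMap.opNorm_comp_le _ _
    _ ≤ ‖A‖ * c := by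
        have : ‖Sc c‖ ≤ c := ContinuousLinearMap.opNorm_le_bound _ hc fun v => by
          simp [Sc, norm_smul, abs_of_nonneg hc]
        gcongr
    _ = c * ‖A‖ := mul_comm _ _

lemma hFdiff : ∀ p ∈ U, DifferentiableAt ℝ Fm p := fun p hp =>
  (contDiffOn_Fm.differentiableOn (by simp)).differentiableAt (isOpen_U.mem_nhds hp)

lemma hF1 : ContDiffOn ℝ ⊤ (fderiv ℝ Fm) U :=
  contDiffOn_Fm.fderiv_of_isOpen isOpen_U le_top

lemma hF1diff : ∀ p ∈ U, DifferentiableAt ℝ (fderiv ℝ Fm) p := fun p hp =>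
  (hF1.differentiableOn (by simp)).differentiableAt (isOpen_U.mem_nhds hp)

lemma cont1 : ContinuousOn (fderiv ℝ Fm) U := hF1.continuousOn

lemma cont2 : ContinuousOn (fderiv ℝ (fderiv ℝ Fm)) U :=
  ContDiffOn.continuousOn (n := ⊤)
    (ContDiffOn.fderiv_of_isOpen (m := ⊤) hF1 isOpen_U le_top)

lemma hasFDeriv_pair (y u : E3) : HasFDerivAt (fun v : E3 => ((y, v) : E3 × E3)) T u :=
  (hasFDerivAt_const y u).prodMk (hasFDerivAt_id u)

lemma hasFDeriv_aff (y : E3) (s : E3) :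
    HasFDerivAt (fun s' : E3 => ((y, s' - y) : E3 × E3)) T s :=
  (hasFDerivAt_const y s).prodMk ((hasFDerivAt_id s).sub_const y)

def D1 (p : E3 × E3) : E3 →L[ℝ] E3 := LTm (fderiv ℝ Fm p)

def D2 (p : E3 × E3) : E3 →L[ℝ] (E3 →L[ℝ] E3) := LTm.comp ((fderiv ℝ (fderiv ℝ Fm) p).comp T)

lemma fderiv_partial1 (y u : E3) (hp : (y, u) ∈ U) :
    HasFDerivAt (fun v => Fm (y, v)) (D1 (y, u)) u :=
  ((hFdiff _ hp).hasFDerivAt).comp u (hasFDeriv_pair y u)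

lemma fderiv_partial2 (y u : E3) (hy : ‖y‖ < 1) (hu : u ≠ 0) :
    HasFDerivAt (fun v => fderiv ℝ (fun w => Fm (y, w)) v) (D2 (y, u)) u := by
  have hp : (y, u) ∈ U := ⟨hy, hu⟩
  have h2 : HasFDerivAt (fun v => fderiv ℝ Fm (y, v))
      ((fderiv ℝ (fderiv ℝ Fm) (y, u)).comp T) u :=
    ((hF1diff _ hp).hasFDerivAt).comp u (hasFDeriv_pair y u)
  have h3 : HasFDerivAt (fun v => LTm (fderiv ℝ Fm (y, v))) (D2 (y, u)) u :=
    (LTm.hasFDerivAt).comp u h2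
  refine h3.congr_of_eventuallyEq ?_
  filter_upwards [compl_singleton_mem_nhds hu] with v hv
  exact (fderiv_partial1 y v ⟨hy, hv⟩).fderiv

lemma D1_homog (y u : E3) (hy : ‖y‖ < 1) (hu : u ≠ 0) {c : ℝ} (hc : 0 < c) :
    D1 (y, u) = (D1 (y, c • u)).comp (Sc c) := by
  have hcu : c • u ≠ 0 := smul_ne_zero hc.ne' hu
  have hG : HasFDerivAt (fun v => Fm (y, v)) (D1 (y, c • u)) (c • u) :=
    fderiv_partial1 y (c • u) ⟨hy, hcu⟩
  have hS : HasFDerivAt (fun v : E3 => c • v) (Sc c) u := (hasFDerivAt_id u).const_smul c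
  have hcomp : HasFDerivAt (fun v => Fm (y, c • v)) ((D1 (y, c • u)).comp (Sc c)) u :=
    hG.comp u hS
  have hev : (fun v => Fm (y, v)) =ᶠ[nhds u] (fun v => Fm (y, c • v)) := by
    filter_upwards [compl_singleton_mem_nhds hu] with v hv
    exact (Fm_homog y v hc hv).symm
  exact (fderiv_partial1 y u ⟨hy, hu⟩).unique (hcomp.congr_of_eventuallyEq hev)

lemma D2_homog (y u : E3) (hy : ‖y‖ < 1) (hu : u ≠ 0) {c : ℝ} (hc : 0 < c) :
    D2 (y, u) = ((ContinuousLinearMap.compL ℝ E3 E3 E3).flip (Sc c)).comp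
      ((D2 (y, c • u)).comp (Sc c)) := by
  have hcu : c • u ≠ 0 := smul_ne_zero hc.ne' hu
  set h : E3 → (E3 →L[ℝ] E3) := fun v => fderiv ℝ (fun w => Fm (y, w)) v with hh
  have hD2cu : HasFDerivAt h (D2 (y, c • u)) (c • u) := fderiv_partial2 y (c • u) hy hcu
  have hS : HasFDerivAt (fun v : E3 => c • v) (Sc c) u := (hasFDerivAt_id u).const_smul c
  have h1 : HasFDerivAt (fun v => h (c • v)) ((D2 (y, c • u)).comp (Sc c)) u :=
    hD2cu.comp u hS
  set Lc := (ContinuousLinearMap.compL ℝ E3 E3 E3).flip (Sc c) with hLc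
  have h2 : HasFDerivAt (fun v => Lc (h (c • v))) (Lc.comp ((D2 (y, c • u)).comp (Sc c))) u :=
    (Lc.hasFDerivAt).comp u h1
  have hev : h =ᶠ[nhds u] (fun v => Lc (h (c • v))) := by
    filter_upwards [compl_singleton_mem_nhds hu] with v hv
    have e1 : h v = D1 (y, v) := (fderiv_partial1 y v ⟨hy, hv⟩).fderiv
    have e2 : h (c • v) = D1 (y, c • v) :=
      (fderiv_partial1 y (c • v) ⟨hy, smul_ne_zero hc.ne' hv⟩).fderiv
    show h v = Lc (h (c • v))
    rw [e1, e2, D1_homog y v hy hv hc]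
    rfl
  exact (fderiv_partial2 y u hy hu).unique (h2.congr_of_eventuallyEq hev)

lemma piProj_hasFDeriv (y : E3) (hy : ‖y‖ < 1) {s : E3} (hs : s ≠ y) :
    HasFDerivAt (piProj y) (D1 (y, s - y)) s := by
  have hp : (y, s - y) ∈ U := ⟨hy, sub_ne_zero.mpr hs⟩
  have h := ((hFdiff _ hp).hasFDerivAt).comp s (hasFDeriv_aff y s)
  exact h.congr_of_eventuallyEq (Filter.Eventually.of_forall fun s' => rfl)

lemma piProj_hasFDeriv2 (y : E3) (hy : ‖y‖ < 1) {s : E3} (hs : s ≠ y) :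
    HasFDerivAt (fderiv ℝ (piProj y)) (D2 (y, s - y)) s := by
  have hp : (y, s - y) ∈ U := ⟨hy, sub_ne_zero.mpr hs⟩
  have h2 : HasFDerivAt (fun s' => fderiv ℝ Fm (y, s' - y))
      ((fderiv ℝ (fderiv ℝ Fm) (y, s - y)).comp T) s :=
    ((hF1diff _ hp).hasFDerivAt).comp s (hasFDeriv_aff y s)
  have h3 : HasFDerivAt (fun s' => LTm (fderiv ℝ Fm (y, s' - y))) (D2 (y, s - y)) s :=
    (LTm.hasFDerivAt).comp s h2
  refine h3.congr_of_eventuallyEq ?_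
  filter_upwards [compl_singleton_mem_nhds hs] with s' hs'
  exact (piProj_hasFDeriv y hy hs').fderiv

lemma norm_D1_le (p : E3 × E3) : ‖D1 p‖ ≤ ‖fderiv ℝ Fm p‖ := norm_LTm_apply _

lemma norm_D2_le (p : E3 × E3) : ‖D2 p‖ ≤ ‖fderiv ℝ (fderiv ℝ Fm) p‖ := by
  refine ContinuousLinearMap.opNorm_le_bound _ (ContinuousLinearMap.opNorm_nonneg _) fun v => ?_
  have e : D2 p v = LTm ((fderiv ℝ (fderiv ℝ Fm) p) (T v)) := rfl
  rw [e]
  calc ‖LTm ((fderiv ℝ (fderiv ℝ Fm) p) (T v))‖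
      ≤ ‖(fderiv ℝ (fderiv ℝ Fm) p) (T v)‖ := by
        calc ‖LTm ((fderiv ℝ (fderiv ℝ Fm) p) (T v))‖
            ≤ ‖LTm‖ * ‖(fderiv ℝ (fderiv ℝ Fm) p) (T v)‖ := LTm.le_opNorm _
          _ ≤ 1 * ‖(fderiv ℝ (fderiv ℝ Fm) p) (T v)‖ :=
              mul_le_mul_of_nonneg_right
                (ContinuousLinearMap.opNorm_le_bound _ zero_le_one fun A => by
                  rw [one_mul]; exact norm_LTm_apply A)
                (norm_nonneg _)
          _ = _ := one_mul _
    _ ≤ ‖fderiv ℝ (fderiv ℝ Fm) p‖ * ‖T v‖ := (fderiv ℝ (fderiv ℝ Fm) p).le_opNorm _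
    _ ≤ ‖fderiv ℝ (fderiv ℝ Fm) p‖ * (1 * ‖v‖) := by
        gcongr
        simpa [one_mul] using T.le_of_opNorm_le normT v
    _ = ‖fderiv ℝ (fderiv ℝ Fm) p‖ * ‖v‖ := by ring

lemma norm_Lc_comp {c : ℝ} (hc : 0 ≤ c) (M : E3 →L[ℝ] (E3 →L[ℝ] E3)) :
    ‖((ContinuousLinearMap.compL ℝ E3 E3 E3).flip (Sc c)).comp M‖ ≤ c * ‖M‖ := by
  refine ContinuousLinearMap.opNorm_le_bound _ (by positivity) fun v => ?_
  have e : (((ContinuousLinearMap.compL ℝ E3 E3 E3).flip (Sc c)).comp M) v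
      = (M v).comp (Sc c) := rfl
  rw [e]
  calc ‖(M v).comp (Sc c)‖ ≤ c * ‖M v‖ := norm_comp_Sc hc _
    _ ≤ c * (‖M‖ * ‖v‖) := by gcongr; exact M.le_opNorm v
    _ = c * ‖M‖ * ‖v‖ := by ring

theorem stmt7 : ∃ C : ℝ, 0 < C ∧
    ∀ y : E3, ‖y‖ < 1 / 2 → ∀ s : E3, ‖s‖ ≤ 1 → s ≠ y →
      ‖fderiv ℝ (piProj y) s‖ ≤ C / ‖s - y‖ ∧
      ‖fderiv ℝ (fderiv ℝ (piProj y)) s‖ ≤ C / ‖s - y‖ ^ 2 := by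
  set K : Set (E3 × E3) := Metric.closedBall (0 : E3) (1/2) ×ˢ Metric.sphere (0 : E3) 1 with hK
  have hKU : K ⊆ U := by
    rintro ⟨y, u⟩ ⟨hy, hu⟩
    have h1 : ‖y‖ ≤ 1/2 := by simpa using hy
    have h2 : ‖u‖ = 1 := by simpa using hu
    refine ⟨by simpa using lt_of_le_of_lt h1 (by norm_num), ?_⟩
    show u ≠ 0
    intro h0
    rw [h0] at h2
    simp at h2
  have hKc : IsCompact K := (isCompact_closedBall _ _).prod (isCompact_sphere _ _)
  obtain ⟨C1, hC1⟩ := hKc.exists_bound_of_continuousOn (cont1.mono hKU)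
  obtain ⟨C2, hC2⟩ := hKc.exists_bound_of_continuousOn (E := E3 × E3 →L[ℝ] (E3 × E3 →L[ℝ] E3)) (cont2.mono hKU)
  refine ⟨max (max C1 C2) 1, lt_of_lt_of_le one_pos (le_max_right _ _), ?_⟩
  intro y hy s _ hsy
  set C := max (max C1 C2) 1 with hCdef
  have hC1le : C1 ≤ C := le_trans (le_max_left _ _) (le_max_left _ _)
  have hC2le : C2 ≤ C := le_trans (le_max_right _ _) (le_max_left _ _)
  have hy1 : ‖y‖ < 1 := by linarith
  have hu : s - y ≠ 0 := sub_ne_zero.mpr hsy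
  have hr : (0:ℝ) < ‖s - y‖ := norm_pos_iff.mpr hu
  have hc : (0:ℝ) < ‖s - y‖⁻¹ := inv_pos.mpr hr
  set c := ‖s - y‖⁻¹ with hcdef
  have hnorm_cu : ‖c • (s - y)‖ = 1 := by
    rw [norm_smul, Real.norm_of_nonneg hc.le, hcdef]
    exact inv_mul_cancel₀ hr.ne'
  have hKmem : (y, c • (s - y)) ∈ K :=
    Set.mk_mem_prod (mem_closedBall_zero_iff.mpr hy.le)
      (mem_sphere_zero_iff_norm.mpr hnorm_cu)
  -- first derivative bound
  have e1 : fderiv ℝ (piProj y) s = D1 (y, s - y) := (piProj_hasFDeriv y hy1 hsy).fderiv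
  have b1 : ‖fderiv ℝ (piProj y) s‖ ≤ C / ‖s - y‖ := by
    rw [e1, D1_homog y (s - y) hy1 hu hc]
    calc ‖(D1 (y, c • (s - y))).comp (Sc c)‖ ≤ c * ‖D1 (y, c • (s - y))‖ :=
          norm_comp_Sc hc.le _
      _ ≤ c * C := by
          gcongr
          calc ‖D1 (y, c • (s - y))‖ ≤ ‖fderiv ℝ Fm (y, c • (s - y))‖ := norm_D1_le _
            _ ≤ C1 := hC1 _ hKmem
            _ ≤ C := hC1le
      _ = C / ‖s - y‖ := by rw [hcdef, inv_mul_eq_div]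
  -- second derivative bound
  have e2 : fderiv ℝ (fderiv ℝ (piProj y)) s = D2 (y, s - y) :=
    (piProj_hasFDeriv2 y hy1 hsy).fderiv
  have b2 : ‖fderiv ℝ (fderiv ℝ (piProj y)) s‖ ≤ C / ‖s - y‖ ^ 2 := by
    rw [e2, D2_homog y (s - y) hy1 hu hc]
    calc ‖((ContinuousLinearMap.compL ℝ E3 E3 E3).flip (Sc c)).comp
          ((D2 (y, c • (s - y))).comp (Sc c))‖
        ≤ c * ‖(D2 (y, c • (s - y))).comp (Sc c)‖ := norm_Lc_comp hc.le _
      _ ≤ c * (c * ‖D2 (y, c • (s - y))‖) := by gcongr; exact norm_comp_Sc hc.le _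
      _ ≤ c * (c * C) := by
          gcongr
          calc ‖D2 (y, c • (s - y))‖ ≤ ‖fderiv ℝ (fderiv ℝ Fm) (y, c • (s - y))‖ :=
                norm_D2_le _
            _ ≤ C2 := hC2 _ hKmem
            _ ≤ C := hC2le
      _ = C / ‖s - y‖ ^ 2 := by rw [hcdef, pow_two, div_eq_mul_inv, mul_inv]; ring
  exact ⟨b1, b2⟩
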